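/- Let g : ℝ^{n×n} → ℝ be given by g(W) = (1/n)‖WΠ − (1/n)𝟙𝟙ᵀΠ‖_F² + (λ/n)‖W − (1/n)𝟙𝟙ᵀ‖_F² with Π ∈ [0,1]^{n×K} row-stochastic and λ ≥ 0. Then for any two doubly stochastic matrices W, P, ‖∇g(W) − ∇g(P)‖_* ≤ 2(λ + (1/n)‖∑ₖ(Π_{:,k} − mean(Π_{:,k})𝟙)Π_{:,k}ᵀ‖_*)·‖W − P‖₂, where ∇g(W) = (2/n)∑ₖ(WΠ_{:,k} − mean(Π_{:,k})𝟙)Π_{:,k}ᵀ + (2λ/n)(W − (1/n)𝟙𝟙ᵀ). -/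

import Mathlib

open Matrix
open scoped Matrix.Norms.L2Operator

/-- The nuclear norm of a real matrix: the sum of its singular values. -/
noncomputable def nuclearNorm {m k : ℕ} (A : Matrix (Fin m) (Fin k) ℝ) : ℝ :=
  ∑ i, Real.sqrt ((Matrix.isHermitian_conjTranspose_mul_self A).eigenvalues i)

/-- The `ℓ₂ → ℓ₂` operator norm (largest singular value) of a real matrix. -/
noncomputable def l2OpNorm {m k : ℕ} (A : Matrix (Fin m) (Fin k) ℝ) : ℝ :=
  ‖(Matrix.toEuclideanLin A).toContinuousLinearMap‖

section Aux
variable {n : ℕ}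

lemma l2OpNorm_eq_norm (A : Matrix (Fin n) (Fin n) ℝ) : l2OpNorm A = ‖A‖ := rfl

lemma l2OpNorm_nonneg (A : Matrix (Fin n) (Fin n) ℝ) : 0 ≤ l2OpNorm A :=
  norm_nonneg _

lemma euclid_norm_eq (x : Fin n → ℝ) :
    ‖(WithLp.equiv 2 (Fin n → ℝ)).symm x‖ = Real.sqrt (x ⬝ᵥ x) := by
  rw [EuclideanSpace.norm_eq]
  congr 1
  simp [dotProduct, sq]

lemma dot_le_sqrt (a b : Fin n → ℝ) :
    a ⬝ᵥ b ≤ Real.sqrt (a ⬝ᵥ a) * Real.sqrt (b ⬝ᵥ b) := by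
  have h := real_inner_le_norm ((WithLp.equiv 2 (Fin n → ℝ)).symm a)
    ((WithLp.equiv 2 (Fin n → ℝ)).symm b)
  rw [euclid_norm_eq, euclid_norm_eq] at h
  simpa [PiLp.inner_apply, dotProduct, RCLike.inner_apply, mul_comm] using h

lemma sqrt_dot_mulVec_le (A : Matrix (Fin n) (Fin n) ℝ) (x : Fin n → ℝ) :
    Real.sqrt ((A *ᵥ x) ⬝ᵥ (A *ᵥ x)) ≤ l2OpNorm A * Real.sqrt (x ⬝ᵥ x) := by
  have h := (Matrix.toEuclideanLin A).toContinuousLinearMap.le_opNorm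
    ((WithLp.equiv 2 (Fin n → ℝ)).symm x)
  rw [LinearMap.coe_toContinuousLinearMap'] at h
  rw [show Matrix.toEuclideanLin A ((WithLp.equiv 2 (Fin n → ℝ)).symm x) =
      (WithLp.equiv 2 (Fin n → ℝ)).symm (Matrix.toLin' A x) from rfl,
    Matrix.toLin'_apply, euclid_norm_eq,
    euclid_norm_eq] at h
  exact h

lemma dot_mulVec_self (M : Matrix (Fin n) (Fin n) ℝ) (y : Fin n → ℝ) :
    y ⬝ᵥ ((Mᴴ * M) *ᵥ y) = (M *ᵥ y) ⬝ᵥ (M *ᵥ y) := by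
  rw [conjTranspose_eq_transpose_of_trivial, ← mulVec_mulVec, dotProduct_mulVec,
    vecMul_transpose]

section core
variable (A : Matrix (Fin n) (Fin n) ℝ)

lemma eigs_nonneg (i : Fin n) :
    0 ≤ (Matrix.isHermitian_conjTranspose_mul_self A).eigenvalues i :=
  (posSemidef_conjTranspose_mul_self A).eigenvalues_nonneg i

lemma nuclearNorm_nonneg : 0 ≤ nuclearNorm A :=
  Finset.sum_nonneg fun _ _ => Real.sqrt_nonneg _

lemma V_facts :
    ∃ V : Matrix (Fin n) (Fin n) ℝ,
      Vᴴ * V = 1 ∧ V * Vᴴ = 1 ∧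
      Vᴴ * (Aᴴ * A) * V =
        diagonal ((Matrix.isHermitian_conjTranspose_mul_self A).eigenvalues) := by
  set hH := Matrix.isHermitian_conjTranspose_mul_self A
  refine ⟨(hH.eigenvectorUnitary : Matrix (Fin n) (Fin n) ℝ), ?_, ?_, ?_⟩
  · exact Matrix.mem_unitaryGroup_iff'.mp hH.eigenvectorUnitary.2
  · exact Matrix.mem_unitaryGroup_iff.mp hH.eigenvectorUnitary.2
  · have h := Matrix.IsHermitian.conjStarAlgAut_star_eigenvectorUnitary hH
    rw [Unitary.conjStarAlgAut_star_apply] at h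
    rw [star_eq_conjTranspose] at h
    rw [h, RCLike.ofReal_real_eq_id, Function.id_comp]

lemma trace_le (X : Matrix (Fin n) (Fin n) ℝ) :
    trace (Aᴴ * X) ≤ nuclearNorm A * l2OpNorm X := by
  obtain ⟨V, hV1, hV2, hdiag⟩ := V_facts A
  set lam := (Matrix.isHermitian_conjTranspose_mul_self A).eigenvalues with hlam
  have hAA : (A * V)ᴴ * (A * V) = diagonal lam := by
    rw [← hdiag]
    simp only [conjTranspose_mul, Matrix.mul_assoc]
  have htr : trace (Aᴴ * X) = trace ((A * V)ᴴ * (X * V)) := by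
    have h1 : (A * V)ᴴ * (X * V) = Vᴴ * ((Aᴴ * X) * V) := by
      simp only [conjTranspose_mul, Matrix.mul_assoc]
    rw [h1, trace_mul_comm Vᴴ, Matrix.mul_assoc (Aᴴ * X) V Vᴴ, hV2, Matrix.mul_one]
  have hsum : trace ((A * V)ᴴ * (X * V)) =
      ∑ i, (fun j => (A * V) j i) ⬝ᵥ (fun j => (X * V) j i) := by
    simp [Matrix.trace, Matrix.diag, Matrix.mul_apply, dotProduct, conjTranspose_apply,
      mul_comm]
  have haa : ∀ i, (fun j => (A * V) j i) ⬝ᵥ (fun j => (A * V) j i) = lam i := by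
    intro i
    have h := congrFun (congrFun hAA i) i
    simpa [Matrix.mul_apply, dotProduct, conjTranspose_apply, diagonal_apply_eq,
      mul_comm] using h
  have hvv : ∀ i, (fun j => V j i) ⬝ᵥ (fun j => V j i) = 1 := by
    intro i
    have h := congrFun (congrFun hV1 i) i
    simpa [Matrix.mul_apply, dotProduct, conjTranspose_apply, Matrix.one_apply_eq,
      mul_comm] using h
  have hcol : ∀ i, (fun j => (X * V) j i) = X *ᵥ (fun j => V j i) := by
    intro i; ext j; simp [Matrix.mul_apply, Matrix.mulVec, dotProduct]
  rw [htr, hsum]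
  have hterm : ∀ i, (fun j => (A * V) j i) ⬝ᵥ (fun j => (X * V) j i) ≤
      Real.sqrt (lam i) * l2OpNorm X := by
    intro i
    calc (fun j => (A * V) j i) ⬝ᵥ (fun j => (X * V) j i)
        ≤ Real.sqrt ((fun j => (A * V) j i) ⬝ᵥ (fun j => (A * V) j i)) *
          Real.sqrt ((fun j => (X * V) j i) ⬝ᵥ (fun j => (X * V) j i)) := dot_le_sqrt _ _
      _ ≤ Real.sqrt (lam i) * l2OpNorm X := by
          rw [haa i]
          refine mul_le_mul_of_nonneg_left ?_ (Real.sqrt_nonneg _)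
          have h := sqrt_dot_mulVec_le X (fun j => V j i)
          rw [hvv i, Real.sqrt_one, mul_one] at h
          rw [hcol i]
          exact h
  calc (∑ i, (fun j => (A * V) j i) ⬝ᵥ (fun j => (X * V) j i))
      ≤ ∑ i, Real.sqrt (lam i) * l2OpNorm X := Finset.sum_le_sum fun i _ => hterm i
    _ = nuclearNorm A * l2OpNorm X := by rw [← Finset.sum_mul]; rfl


lemma trace_attain : ∃ X : Matrix (Fin n) (Fin n) ℝ,
    l2OpNorm X ≤ 1 ∧ trace (Aᴴ * X) = nuclearNorm A := by
  obtain ⟨V, hV1, hV2, hdiag⟩ := V_facts A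
  set lam := (Matrix.isHermitian_conjTranspose_mul_self A).eigenvalues with hlamdef
  have hlam0 : ∀ i, 0 ≤ lam i := eigs_nonneg A
  set s : Fin n → ℝ := fun i => if lam i = 0 then 0 else (Real.sqrt (lam i))⁻¹ with hs
  have hAV : Aᴴ * (A * V) = V * diagonal lam := by
    calc Aᴴ * (A * V) = (V * Vᴴ) * (Aᴴ * A) * V := by
          rw [hV2, Matrix.one_mul, Matrix.mul_assoc]
      _ = V * (Vᴴ * (Aᴴ * A) * V) := by simp only [Matrix.mul_assoc]
      _ = V * diagonal lam := by rw [hdiag]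
  refine ⟨A * V * diagonal s * Vᴴ, ?_, ?_⟩
  · -- norm bound
    set e : Fin n → ℝ := fun i => s i * (lam i * s i) with he
    have hXX : (A * V * diagonal s * Vᴴ)ᴴ * (A * V * diagonal s * Vᴴ)
        = V * (diagonal e * Vᴴ) := by
      have hXt : (A * V * diagonal s * Vᴴ)ᴴ = V * (diagonal s * (Vᴴ * Aᴴ)) := by
        simp [conjTranspose_mul, diagonal_conjTranspose, Matrix.mul_assoc]
      rw [hXt]
      calc V * (diagonal s * (Vᴴ * Aᴴ)) * (A * V * diagonal s * Vᴴ)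
          = V * (diagonal s * (Vᴴ * (Aᴴ * (A * V)) * (diagonal s * Vᴴ))) := by
            simp only [Matrix.mul_assoc]
        _ = V * (diagonal s * (Vᴴ * (V * diagonal lam) * (diagonal s * Vᴴ))) := by
            rw [hAV]
        _ = V * (diagonal s * (diagonal lam * (diagonal s * Vᴴ))) := by
            rw [← Matrix.mul_assoc Vᴴ V, hV1, Matrix.one_mul]
        _ = V * (diagonal e * Vᴴ) := by
            rw [← Matrix.mul_assoc (diagonal lam), diagonal_mul_diagonal,
              ← Matrix.mul_assoc (diagonal s), diagonal_mul_diagonal]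
    have he01 : ∀ i, 0 ≤ e i ∧ e i ≤ 1 := by
      intro i
      rw [he, hs]
      by_cases h : lam i = 0
      · simp [h]
      · have hpos : 0 < lam i := lt_of_le_of_ne (hlam0 i) (Ne.symm h)
        have hsq : Real.sqrt (lam i) * Real.sqrt (lam i) = lam i :=
          Real.mul_self_sqrt (hlam0 i)
        have hsp : 0 < Real.sqrt (lam i) := Real.sqrt_pos.mpr hpos
        simp only [h, if_false]
        constructor
        · positivity
        · rw [show (Real.sqrt (lam i))⁻¹ * (lam i * (Real.sqrt (lam i))⁻¹) =
            (Real.sqrt (lam i) * Real.sqrt (lam i))⁻¹ * lam i by ring, hsq,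
            inv_mul_cancel₀ (ne_of_gt hpos)]
    rw [l2OpNorm]
    apply ContinuousLinearMap.opNorm_le_bound _ zero_le_one
    intro y
    rw [one_mul]
    obtain ⟨x, rfl⟩ : ∃ x, (WithLp.equiv 2 (Fin n → ℝ)).symm x = y :=
      ⟨WithLp.equiv 2 _ y, by simp⟩
    rw [LinearMap.coe_toContinuousLinearMap',
      show Matrix.toEuclideanLin (A * V * diagonal s * Vᴴ) ((WithLp.equiv 2 (Fin n → ℝ)).symm x) =
        (WithLp.equiv 2 (Fin n → ℝ)).symm (Matrix.toLin' (A * V * diagonal s * Vᴴ) x) from rfl,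
      Matrix.toLin'_apply, euclid_norm_eq, euclid_norm_eq]
    apply Real.sqrt_le_sqrt
    rw [← dot_mulVec_self, hXX]
    have hVt : Vᴴ = Vᵀ := conjTranspose_eq_transpose_of_trivial V
    have hVVt : V * Vᵀ = 1 := by rw [← hVt]; exact hV2
    rw [hVt, ← mulVec_mulVec, dotProduct_mulVec, ← mulVec_mulVec]
    rw [show x ᵥ* V = Vᵀ *ᵥ x from (mulVec_transpose V x).symm]
    calc (Vᵀ *ᵥ x) ⬝ᵥ (diagonal e *ᵥ (Vᵀ *ᵥ x))
        ≤ (Vᵀ *ᵥ x) ⬝ᵥ (Vᵀ *ᵥ x) := by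
          rw [dotProduct, dotProduct]
          apply Finset.sum_le_sum
          intro i _
          rw [mulVec_diagonal]
          have h1 := (he01 i).1
          have h2 := (he01 i).2
          nlinarith [sq_nonneg ((Vᵀ *ᵥ x) i)]
      _ = x ⬝ᵥ x := by
          rw [← dot_mulVec_self Vᵀ x,
            show Vᵀᴴ = V by rw [conjTranspose_eq_transpose_of_trivial, transpose_transpose],
            hVVt, one_mulVec]
  · -- trace value
    have htr : trace (Aᴴ * (A * V * diagonal s * Vᴴ)) = trace (diagonal lam * diagonal s) := by
      calc trace (Aᴴ * (A * V * diagonal s * Vᴴ))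
          = trace (Vᴴ * (Aᴴ * (A * V) * diagonal s)) := by
            rw [trace_mul_comm Vᴴ]
            congr 1
            simp only [Matrix.mul_assoc]
        _ = trace (Vᴴ * (V * (diagonal lam * diagonal s))) := by
            rw [hAV]
            simp only [Matrix.mul_assoc]
        _ = trace (diagonal lam * diagonal s) := by
            rw [← Matrix.mul_assoc, hV1, Matrix.one_mul]
    rw [htr, diagonal_mul_diagonal, trace_diagonal]
    unfold nuclearNorm
    apply Finset.sum_congr rfl
    intro i _
    rw [hs]
    by_cases h : lam i = 0
    · simp [h]; exact (Real.sqrt_eq_zero'.mpr (le_of_eq h)).symm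
    · have hpos : 0 < lam i := lt_of_le_of_ne (hlam0 i) (Ne.symm h)
      have hsq : Real.sqrt (lam i) * Real.sqrt (lam i) = lam i :=
        Real.mul_self_sqrt (hlam0 i)
      have hsp : 0 < Real.sqrt (lam i) := Real.sqrt_pos.mpr hpos
      simp only [h, if_false]
      rw [show lam i * (Real.sqrt (lam i))⁻¹ =
        (Real.sqrt (lam i) * Real.sqrt (lam i)) * (Real.sqrt (lam i))⁻¹ by rw [hsq],
        mul_inv_cancel_right₀ (ne_of_gt hsp)]

lemma l2OpNorm_mul_le (A B : Matrix (Fin n) (Fin n) ℝ) :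
    l2OpNorm (A * B) ≤ l2OpNorm A * l2OpNorm B := by
  simp only [l2OpNorm_eq_norm]; exact l2_opNorm_mul A B

lemma l2OpNorm_conjT (A : Matrix (Fin n) (Fin n) ℝ) : l2OpNorm Aᴴ = l2OpNorm A := by
  simp only [l2OpNorm_eq_norm]; exact l2_opNorm_conjTranspose A

lemma nuclearNorm_add_le (A B : Matrix (Fin n) (Fin n) ℝ) :
    nuclearNorm (A + B) ≤ nuclearNorm A + nuclearNorm B := by
  obtain ⟨X, hX, htr⟩ := trace_attain (A + B)
  have hsplit : trace ((A + B)ᴴ * X) = trace (Aᴴ * X) + trace (Bᴴ * X) := by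
    rw [conjTranspose_add, Matrix.add_mul, trace_add]
  have hA : trace (Aᴴ * X) ≤ nuclearNorm A := by
    calc trace (Aᴴ * X) ≤ nuclearNorm A * l2OpNorm X := trace_le A X
      _ ≤ nuclearNorm A * 1 := mul_le_mul_of_nonneg_left hX (nuclearNorm_nonneg A)
      _ = nuclearNorm A := mul_one _
  have hB : trace (Bᴴ * X) ≤ nuclearNorm B := by
    calc trace (Bᴴ * X) ≤ nuclearNorm B * l2OpNorm X := trace_le B X
      _ ≤ nuclearNorm B * 1 := mul_le_mul_of_nonneg_left hX (nuclearNorm_nonneg B)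
      _ = nuclearNorm B := mul_one _
  linarith [htr ▸ hsplit]

lemma nuclearNorm_smul_le (c : ℝ) (hc : 0 ≤ c) (A : Matrix (Fin n) (Fin n) ℝ) :
    nuclearNorm (c • A) ≤ c * nuclearNorm A := by
  obtain ⟨X, hX, htr⟩ := trace_attain (c • A)
  have hsplit : trace ((c • A)ᴴ * X) = c * trace (Aᴴ * X) := by
    rw [conjTranspose_smul, star_trivial, smul_mul_assoc, trace_smul, smul_eq_mul]
  rw [← htr, hsplit]
  calc c * trace (Aᴴ * X) ≤ c * (nuclearNorm A * l2OpNorm X) :=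
        mul_le_mul_of_nonneg_left (trace_le A X) hc
    _ ≤ c * (nuclearNorm A * 1) := by
        apply mul_le_mul_of_nonneg_left _ hc
        exact mul_le_mul_of_nonneg_left hX (nuclearNorm_nonneg A)
    _ = c * nuclearNorm A := by rw [mul_one]

lemma nuclearNorm_mul_le (A B : Matrix (Fin n) (Fin n) ℝ) :
    nuclearNorm (A * B) ≤ l2OpNorm A * nuclearNorm B := by
  obtain ⟨X, hX, htr⟩ := trace_attain (A * B)
  have hsplit : trace ((A * B)ᴴ * X) = trace (Bᴴ * (Aᴴ * X)) := by
    rw [conjTranspose_mul, Matrix.mul_assoc]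
  rw [← htr, hsplit]
  calc trace (Bᴴ * (Aᴴ * X)) ≤ nuclearNorm B * l2OpNorm (Aᴴ * X) := trace_le B _
    _ ≤ nuclearNorm B * (l2OpNorm Aᴴ * l2OpNorm X) :=
        mul_le_mul_of_nonneg_left (l2OpNorm_mul_le Aᴴ X) (nuclearNorm_nonneg B)
    _ ≤ nuclearNorm B * (l2OpNorm Aᴴ * 1) := by
        apply mul_le_mul_of_nonneg_left _ (nuclearNorm_nonneg B)
        exact mul_le_mul_of_nonneg_left hX (l2OpNorm_nonneg Aᴴ)
    _ = l2OpNorm A * nuclearNorm B := by rw [mul_one, l2OpNorm_conjT, mul_comm]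

lemma nuclearNorm_le_dim_mul (A : Matrix (Fin n) (Fin n) ℝ) :
    nuclearNorm A ≤ (n : ℝ) * l2OpNorm A := by
  obtain ⟨X, hX, htr⟩ := trace_attain A
  rw [← htr]
  have hsum : trace (Aᴴ * X) = ∑ i, (fun j => A j i) ⬝ᵥ (fun j => X j i) := by
    simp [Matrix.trace, Matrix.diag, Matrix.mul_apply, dotProduct, conjTranspose_apply,
      mul_comm]
  rw [hsum]
  have hcol : ∀ (M : Matrix (Fin n) (Fin n) ℝ) (i : Fin n),
      (fun j => M j i) = M *ᵥ Pi.single i 1 := by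
    intro M i; ext j
    simp [Matrix.mulVec, dotProduct, Pi.single_apply]
  have hsingle : ∀ i : Fin n, (Pi.single i 1 : Fin n → ℝ) ⬝ᵥ Pi.single i 1 = 1 := by
    intro i; simp [dotProduct, Pi.single_apply]
  have hterm : ∀ i, (fun j => A j i) ⬝ᵥ (fun j => X j i) ≤ l2OpNorm A := by
    intro i
    calc (fun j => A j i) ⬝ᵥ (fun j => X j i)
        ≤ Real.sqrt ((fun j => A j i) ⬝ᵥ (fun j => A j i)) *
          Real.sqrt ((fun j => X j i) ⬝ᵥ (fun j => X j i)) := dot_le_sqrt _ _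
      _ ≤ l2OpNorm A * (l2OpNorm X * 1) := by
          apply mul_le_mul
          · have h := sqrt_dot_mulVec_le A (Pi.single i 1)
            rw [hsingle i, Real.sqrt_one, mul_one] at h
            rw [hcol A i]; exact h
          · have h := sqrt_dot_mulVec_le X (Pi.single i 1)
            rw [hsingle i, Real.sqrt_one] at h
            rw [hcol X i]; exact h
          · exact Real.sqrt_nonneg _
          · exact l2OpNorm_nonneg A
      _ ≤ l2OpNorm A * 1 := by
          apply mul_le_mul_of_nonneg_left _ (l2OpNorm_nonneg A)
          rw [mul_one]; exact hX
      _ = l2OpNorm A := mul_one _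
  calc (∑ i, (fun j => A j i) ⬝ᵥ (fun j => X j i)) ≤ ∑ _i : Fin n, l2OpNorm A :=
        Finset.sum_le_sum fun i _ => hterm i
    _ = (n : ℝ) * l2OpNorm A := by simp

end core

end Aux

/-- Smoothness of the topology-learning objective: its gradient is Lipschitz from the
operator norm to the nuclear norm, with constant
`2(λ + (1/n)‖∑ₖ(Π₍:,k₎ − mean(Π₍:,k₎)𝟙)Π₍:,k₎ᵀ‖_*)`. -/
theorem stmt_18 {n K : ℕ} (hn : 0 < n) (Pi : Matrix (Fin n) (Fin K) ℝ)
    (hPi01 : ∀ i k, Pi i k ∈ Set.Icc (0:ℝ) 1)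
    (hPirow : ∀ i, ∑ k, Pi i k = 1)
    (lam : ℝ) (hlam : 0 ≤ lam)
    (J : Matrix (Fin n) (Fin n) ℝ) (hJ : J = (n : ℝ)⁻¹ • Matrix.of fun _ _ => (1:ℝ))
    (gradg : Matrix (Fin n) (Fin n) ℝ → Matrix (Fin n) (Fin n) ℝ)
    (hgradg : ∀ W, gradg W =
      (2 / (n : ℝ)) • (∑ k, Matrix.vecMulVec
          (fun i => (W.mulVec fun j => Pi j k) i - (n : ℝ)⁻¹ * ∑ i', Pi i' k)
          (fun j => Pi j k))
        + ((2 * lam) / (n : ℝ)) • (W - J)) :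
    ∀ W P : Matrix (Fin n) (Fin n) ℝ,
      (∀ i j, W i j ∈ Set.Icc (0:ℝ) 1) → W.mulVec 1 = 1 → Matrix.vecMul 1 W = 1 →
      (∀ i j, P i j ∈ Set.Icc (0:ℝ) 1) → P.mulVec 1 = 1 → Matrix.vecMul 1 P = 1 →
      nuclearNorm (gradg W - gradg P) ≤
        2 * (lam + (1 / (n : ℝ)) * nuclearNorm (∑ k, Matrix.vecMulVec
            (fun i => Pi i k - (n : ℝ)⁻¹ * ∑ i', Pi i' k) (fun j => Pi j k)))
          * l2OpNorm (W - P) := by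
  intro W P hW hW1 hW1' hP hP1 hP1'
  set M := ∑ k, Matrix.vecMulVec
      (fun i => Pi i k - (n : ℝ)⁻¹ * ∑ i', Pi i' k) (fun j => Pi j k) with hM
  set D := W - P with hD
  have hD1 : ∀ i, ∑ l, (W i l - P i l) = 0 := by
    intro i
    have hw := congrFun hW1 i
    have hp := congrFun hP1 i
    simp only [Matrix.mulVec, dotProduct, _root_.Pi.one_apply, mul_one] at hw hp
    rw [Finset.sum_sub_distrib, hw, hp, sub_self]
  have hsumeq : (∑ k, Matrix.vecMulVec
        (fun i => (W.mulVec fun j => Pi j k) i - (n : ℝ)⁻¹ * ∑ i', Pi i' k)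
        (fun j => Pi j k))
      - (∑ k, Matrix.vecMulVec
        (fun i => (P.mulVec fun j => Pi j k) i - (n : ℝ)⁻¹ * ∑ i', Pi i' k)
        (fun j => Pi j k))
      = D * M := by
    rw [hM, Finset.mul_sum, ← Finset.sum_sub_distrib]
    apply Finset.sum_congr rfl
    intro k _
    ext i j
    have expand : ∑ l, D i l * ((Pi l k - (n : ℝ)⁻¹ * ∑ i', Pi i' k) * Pi j k)
        = (∑ l, D i l * Pi l k) * Pi j k
          - (∑ l, D i l) * (((n : ℝ)⁻¹ * ∑ i', Pi i' k) * Pi j k) := by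
      rw [Finset.sum_mul, Finset.sum_mul, ← Finset.sum_sub_distrib]
      apply Finset.sum_congr rfl
      intro l _
      ring
    have hD0 : ∑ l, D i l = 0 := by
      rw [hD]; simpa using hD1 i
    simp only [Matrix.sub_apply, Matrix.vecMulVec_apply, Matrix.mul_apply]
    rw [expand, hD0, zero_mul, sub_zero]
    simp only [Matrix.mulVec, dotProduct, hD, Matrix.sub_apply]
    rw [Finset.sum_mul]
    rw [show (∑ l, (W i l - P i l) * Pi l k * Pi j k)
      = ∑ l, (W i l * Pi l k * Pi j k - P i l * Pi l k * Pi j k) from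
        Finset.sum_congr rfl fun l _ => by ring]
    rw [Finset.sum_sub_distrib, ← Finset.sum_mul, ← Finset.sum_mul]
    ring
  have hgrad : gradg W - gradg P = (2 / (n : ℝ)) • (D * M) + ((2 * lam) / (n : ℝ)) • D := by
    rw [hgradg W, hgradg P, ← hsumeq]
    simp only [hD, smul_sub]
    abel
  rw [hgrad]
  have hn' : (0:ℝ) < n := by exact_mod_cast hn
  have h1 : nuclearNorm ((2 / (n : ℝ)) • (D * M) + ((2 * lam) / (n : ℝ)) • D)
      ≤ (2 / (n : ℝ)) * nuclearNorm (D * M) + ((2 * lam) / (n : ℝ)) * nuclearNorm D :=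
    le_trans (nuclearNorm_add_le _ _)
      (add_le_add (nuclearNorm_smul_le _ (by positivity) _)
        (nuclearNorm_smul_le _ (div_nonneg (by linarith) (by positivity)) _))
  have h2 : nuclearNorm (D * M) ≤ l2OpNorm D * nuclearNorm M := nuclearNorm_mul_le D M
  have h3 : nuclearNorm D ≤ (n : ℝ) * l2OpNorm D := nuclearNorm_le_dim_mul D
  calc nuclearNorm ((2 / (n : ℝ)) • (D * M) + ((2 * lam) / (n : ℝ)) • D)
      ≤ (2 / (n : ℝ)) * nuclearNorm (D * M) + ((2 * lam) / (n : ℝ)) * nuclearNorm D := h1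
    _ ≤ (2 / (n : ℝ)) * (l2OpNorm D * nuclearNorm M)
        + ((2 * lam) / (n : ℝ)) * ((n : ℝ) * l2OpNorm D) := by
        apply add_le_add
        · exact mul_le_mul_of_nonneg_left h2 (by positivity)
        · exact mul_le_mul_of_nonneg_left h3 (div_nonneg (by linarith) (by positivity))
    _ = 2 * (lam + (1 / (n : ℝ)) * nuclearNorm M) * l2OpNorm D := by
        field_simp
        ring
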